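/- Let (J,W) be a graphon and P = {J₁,…,J_k} a weak regularity partition with error ε, i.e., ‖W − W_P‖_□ ≤ ε. Then there exist points v_i ∈ J_i such that S = {v₁,…,v_k} is an average (4ε)-net in the similarity metric: ∫_J min_i r_{W∘W}(x, v_i) dπ(x) ≤ 4ε. -/

import Mathlib

open MeasureTheory

lemma abs_int_le' {α : Type*} [MeasurableSpace α] (ν : Measure α) (f : α → ℝ) :
    |∫ x, f x ∂ν| ≤ ∫ x, |f x| ∂ν := by
  simpa [Real.norm_eq_abs] using norm_integral_le_integral_norm (μ := ν) f

lemma bdd_integrable' {α : Type*} [MeasurableSpace α] {ν : Measure α} [IsFiniteMeasure ν]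
    {f : α → ℝ} (hf : AEStronglyMeasurable f ν) (C : ℝ) (h : ∀ a, |f a| ≤ C) :
    Integrable f ν :=
  (integrable_const C).mono' hf (Filter.Eventually.of_forall fun a => by
    simpa [Real.norm_eq_abs] using h a)

lemma exists_le_avg' {α : Type*} [MeasurableSpace α] {ν : Measure α} {s : Set α}
    (hs : MeasurableSet s) (h0 : 0 < ν s) (htop : ν s ≠ ⊤) {f : α → ℝ}
    (hfi : IntegrableOn f s ν) :
    ∃ v ∈ s, f v * (ν s).toReal ≤ ∫ x in s, f x ∂ν := by
  by_contra hcon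
  push_neg at hcon
  have htpos : 0 < (ν s).toReal := ENNReal.toReal_pos h0.ne' htop
  set c : ℝ := (∫ x in s, f x ∂ν) / (ν s).toReal with hc
  have hlt : ∀ v ∈ s, c < f v := by
    intro v hv
    rw [hc, div_lt_iff₀ htpos]
    exact hcon v hv
  have hci : IntegrableOn (fun _ : α => c) s ν :=
    integrableOn_const htop
  have hzero : ∫ x in s, (f x - c) ∂ν = 0 := by
    rw [integral_sub hfi hci, setIntegral_const, smul_eq_mul, measureReal_def, hc]
    field_simp
    simp
  have hpos : 0 < ∫ x in s, (f x - c) ∂ν := by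
    refine (setIntegral_pos_iff_support_of_nonneg_ae ?_ (hfi.sub hci)).mpr ?_
    · refine (ae_restrict_iff' hs).mpr (Filter.Eventually.of_forall fun x hx => ?_)
      exact sub_nonneg.mpr (hlt x hx).le
    · refine h0.trans_le (measure_mono ?_)
      intro x hx
      exact ⟨(sub_pos.mpr (hlt x hx)).ne', hx⟩
  linarith

/-- If `P = {J₁,…,J_k}` is a weak regularity partition of a graphon `(J,W)`
with error `ε` (in the cut norm), then one can choose points `vᵢ ∈ Jᵢ` forming
an average `4ε`-net in the similarity metric `r_{W∘W}`. -/
theorem weak_regularity_gives_average_net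
    {J : Type*} [MeasurableSpace J] (μ : Measure J) [IsProbabilityMeasure μ]
    (W : J → J → ℝ)
    (hWmeas : Measurable (fun p : J × J => W p.1 p.2))
    (hWsymm : ∀ x y, W x y = W y x)
    (hW0 : ∀ x y, 0 ≤ W x y) (hW1 : ∀ x y, W x y ≤ 1)
    (simdist : J → J → ℝ)
    (hsim : ∀ a b, simdist a b = ∫ x, |∫ y, W x y * (W y a - W y b) ∂μ| ∂μ)
    (k : ℕ) (hk : 0 < k)
    (P : Fin k → Set J)
    (hPmeas : ∀ i, MeasurableSet (P i))
    (hPdisj : ∀ i j, i ≠ j → Disjoint (P i) (P j))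
    (hPcover : (⋃ i, P i) = Set.univ)
    (hPpos : ∀ i, 0 < μ (P i))
    (WP : J → J → ℝ)
    (hWP : ∀ i j, ∀ x ∈ P i, ∀ y ∈ P j, WP x y =
      (∫ u in P i, ∫ v in P j, W u v ∂μ ∂μ) /
        ((μ (P i)).toReal * (μ (P j)).toReal))
    (ε : ℝ) (hε : 0 < ε)
    (hcut : ∀ A B : Set J, MeasurableSet A → MeasurableSet B →
      |∫ u in A, ∫ v in B, (W u v - WP u v) ∂μ ∂μ| ≤ ε) :
    ∃ v : Fin k → J, (∀ i, v i ∈ P i) ∧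
      (∫ x, (Finset.univ.inf' (Finset.univ_nonempty_iff.mpr ⟨⟨0, hk⟩⟩)
        fun i => simdist x (v i)) ∂μ) ≤ 4 * ε := by
  classical
  -- the class of each point
  have hmem : ∀ x : J, ∃ i, x ∈ P i := by
    intro x
    have hx : x ∈ ⋃ i, P i := hPcover ▸ Set.mem_univ x
    exact Set.mem_iUnion.mp hx
  choose cls hcls using hmem
  have hclsEq : ∀ {x : J} {i : Fin k}, x ∈ P i → cls x = i := by
    intro x i hx
    by_contra hne
    exact Set.disjoint_left.mp (hPdisj _ _ hne) (hcls x) hx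
  -- basic measurability and bounds for W
  have hWm1 : ∀ z, Measurable fun y => W z y := fun z =>
    hWmeas.comp (measurable_const.prodMk measurable_id)
  have hWm2 : ∀ x, Measurable fun y => W y x := fun x =>
    hWmeas.comp (measurable_id.prodMk measurable_const)
  have hWabs : ∀ x y, |W x y| ≤ 1 := fun x y =>
    abs_le.mpr ⟨by linarith [hW0 x y], hW1 x y⟩
  have hWint2 : ∀ u, Integrable (fun v => W u v) μ := fun u =>
    bdd_integrable' (hWm1 u).aestronglyMeasurable 1 (fun v => hWabs u v)
  -- the step values
  set c : Fin k → Fin k → ℝ := fun i j =>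
    (∫ u in P i, ∫ v in P j, W u v ∂μ ∂μ) /
      ((μ (P i)).toReal * (μ (P j)).toReal) with hcdef
  have hμt : ∀ i, 0 < (μ (P i)).toReal := fun i =>
    ENNReal.toReal_pos (hPpos i).ne' (measure_ne_top μ _)
  have hWPc : ∀ (i j : Fin k) (x : J), x ∈ P i → ∀ y ∈ P j, WP x y = c i j := by
    intro i j x hx y hy
    exact hWP i j x hx y hy
  have hinner_nonneg : ∀ u j, 0 ≤ ∫ v in P j, W u v ∂μ := fun u j =>
    setIntegral_nonneg (hPmeas j) fun v _ => hW0 u v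
  have hinner_le : ∀ u j, ∫ v in P j, W u v ∂μ ≤ (μ (P j)).toReal := by
    intro u j
    calc ∫ v in P j, W u v ∂μ ≤ ∫ v in P j, (1 : ℝ) ∂μ :=
          setIntegral_mono_on (hWint2 u).integrableOn
            (integrableOn_const (measure_ne_top μ _))
            (hPmeas j) fun v _ => hW1 u v
      _ = (μ (P j)).toReal := by simp [measureReal_def]
  have houter_meas : ∀ j, Measurable fun u => ∫ v in P j, W u v ∂μ := fun j =>
    (hWmeas.stronglyMeasurable.integral_prod_right' (ν := μ.restrict (P j))).measurable
  have hc0 : ∀ i j, 0 ≤ c i j := by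
    intro i j
    apply div_nonneg _ (le_of_lt (mul_pos (hμt i) (hμt j)))
    exact setIntegral_nonneg (hPmeas i) fun u _ => hinner_nonneg u j
  have hc1 : ∀ i j, c i j ≤ 1 := by
    intro i j
    rw [hcdef]
    rw [div_le_one (mul_pos (hμt i) (hμt j))]
    calc ∫ u in P i, ∫ v in P j, W u v ∂μ ∂μ
        ≤ ∫ u in P i, (μ (P j)).toReal ∂μ := by
          refine setIntegral_mono_on ?_ ?_ (hPmeas i) fun u _ => hinner_le u j
          · exact (bdd_integrable' (houter_meas j).aestronglyMeasurable (μ (P j)).toReal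
              (fun u => abs_le.mpr ⟨by linarith [hinner_nonneg u j, ENNReal.toReal_nonneg (a := μ (P j))], hinner_le u j⟩)).integrableOn
          · exact integrableOn_const (measure_ne_top μ _)
      _ = (μ (P i)).toReal * (μ (P j)).toReal := by
          rw [setIntegral_const, smul_eq_mul, measureReal_def]
  have hWP0 : ∀ x y, 0 ≤ WP x y := by
    intro x y
    rw [hWPc (cls x) (cls y) x (hcls x) y (hcls y)]
    exact hc0 _ _
  have hWP1 : ∀ x y, WP x y ≤ 1 := by
    intro x y
    rw [hWPc (cls x) (cls y) x (hcls x) y (hcls y)]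
    exact hc1 _ _
  have hU1 : ∀ y x, |W y x - WP y x| ≤ 1 := by
    intro y x
    rw [abs_le]
    constructor <;> [linarith [hW0 y x, hWP1 y x]; linarith [hW1 y x, hWP0 y x]]
  -- joint measurability of WP
  have hWPrep : ∀ x y, WP x y = ∑ i : Fin k, ∑ j : Fin k,
      (P i).indicator (fun _ => c i j) x * (P j).indicator (fun _ => (1:ℝ)) y := by
    intro x y
    rw [Finset.sum_eq_single (cls x)]
    · rw [Finset.sum_eq_single (cls y)]
      · rw [Set.indicator_of_mem (hcls x), Set.indicator_of_mem (hcls y),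
          hWPc (cls x) (cls y) x (hcls x) y (hcls y), mul_one]
      · intro j _ hj
        rw [Set.indicator_of_notMem (fun hy => hj (hclsEq hy).symm), mul_zero]
      · intro h; exact absurd (Finset.mem_univ _) h
    · intro i _ hi
      refine Finset.sum_eq_zero fun j _ => ?_
      rw [Set.indicator_of_notMem (fun hx => hi (hclsEq hx).symm), zero_mul]
    · intro h; exact absurd (Finset.mem_univ _) h
  have hWPmeas : Measurable (fun p : J × J => WP p.1 p.2) := by
    have : (fun p : J × J => WP p.1 p.2) = fun p : J × J => ∑ i : Fin k, ∑ j : Fin k,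
        (P i).indicator (fun _ => c i j) p.1 * (P j).indicator (fun _ => (1:ℝ)) p.2 :=
      funext fun p => hWPrep p.1 p.2
    rw [this]
    refine Finset.measurable_sum _ fun i _ => Finset.measurable_sum _ fun j _ => ?_
    exact ((measurable_const.indicator (hPmeas i)).comp measurable_fst).mul
      ((measurable_const.indicator (hPmeas j)).comp measurable_snd)
  have hWPm2 : ∀ x, Measurable fun y => WP y x := fun x =>
    hWPmeas.comp (measurable_id.prodMk measurable_const)
  -- the kernel A
  set A : J × J → ℝ := fun p => ∫ y, W p.1 y * (W y p.2 - WP y p.2) ∂μ with hAdef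
  have hprodmeas : Measurable (fun q : (J × J) × J => W q.1.1 q.2 * (W q.2 q.1.2 - WP q.2 q.1.2)) := by
    refine (hWmeas.comp (measurable_fst.fst.prodMk measurable_snd)).mul ?_
    exact (hWmeas.comp (measurable_snd.prodMk measurable_fst.snd)).sub
      (hWPmeas.comp (measurable_snd.prodMk measurable_fst.snd))
  have hAmeas : Measurable A := by
    exact (hprodmeas.stronglyMeasurable.integral_prod_right' (ν := μ)).measurable
  have hyint : ∀ z x, Integrable (fun y => W z y * (W y x - WP y x)) μ := by
    intro z x
    refine bdd_integrable' ?_ 1 ?_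
    · exact (((hWm1 z).mul ((hWm2 x).sub (hWPm2 x)))).aestronglyMeasurable
    · intro y
      rw [abs_mul]
      calc |W z y| * |W y x - WP y x| ≤ 1 * 1 :=
        mul_le_mul (hWabs z y) (hU1 y x) (abs_nonneg _) zero_le_one
      _ = 1 := mul_one 1
  have hAbd : ∀ p, |A p| ≤ 1 := by
    intro p
    rw [hAdef]
    calc |∫ y, W p.1 y * (W y p.2 - WP y p.2) ∂μ|
        ≤ ∫ y, |W p.1 y * (W y p.2 - WP y p.2)| ∂μ := abs_int_le' _ _
      _ ≤ ∫ y, (1:ℝ) ∂μ := by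
          refine integral_mono (hyint p.1 p.2).abs (integrable_const 1) fun y => ?_
          rw [abs_mul]
          calc |W p.1 y| * |W y p.2 - WP y p.2| ≤ 1 * 1 :=
            mul_le_mul (hWabs p.1 y) (hU1 y p.2) (abs_nonneg _) zero_le_one
          _ = 1 := mul_one 1
      _ = 1 := by simp
  -- the one-sided cut bound, for every z and measurable T
  have hkey : ∀ z : J, ∀ T : Set J, MeasurableSet T →
      |∫ x in T, A (z, x) ∂μ| ≤ ε := by
    intro z T hT
    set g : J → ℝ := fun y => ∫ x in T, (W y x - WP y x) ∂μ with hgdef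
    have hgmeas : Measurable g := by
      have h1 : Measurable (fun q : J × J => W q.1 q.2 - WP q.1 q.2) := by
        exact hWmeas.sub hWPmeas
      exact (h1.stronglyMeasurable.integral_prod_right' (ν := μ.restrict T)).measurable
    have hgbd : ∀ y, |g y| ≤ 1 := by
      intro y
      calc |g y| ≤ ∫ x in T, |W y x - WP y x| ∂μ := abs_int_le' _ _
        _ ≤ ∫ x in T, (1:ℝ) ∂μ := by
            refine setIntegral_mono_on ?_ ?_ hT fun x _ => hU1 y x
            · exact (bdd_integrable' (((hWm1 y).sub
                (hWPmeas.comp (measurable_const.prodMk measurable_id))).abs).aestronglyMeasurable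
                1 (fun x => by rw [abs_abs]; exact hU1 y x)).integrableOn
            · exact integrableOn_const (measure_ne_top μ _)
        _ = (μ T).toReal := by simp [measureReal_def]
        _ ≤ 1 := by
            simpa using ENNReal.toReal_mono ENNReal.one_ne_top (prob_le_one (μ := μ) (s := T))
    have hgint : Integrable g μ := bdd_integrable' hgmeas.aestronglyMeasurable 1 hgbd
    -- Fubini: ∫_T A(z,·) = ∫ y, W z y * g y
    have hswap : ∫ x in T, A (z, x) ∂μ = ∫ y, W z y * g y ∂μ := by
      have hint : Integrable (Function.uncurry fun x y => W z y * (W y x - WP y x))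
          ((μ.restrict T).prod μ) := by
        refine bdd_integrable' ?_ 1 ?_
        · refine Measurable.aestronglyMeasurable ?_
          refine ((hWm1 z).comp measurable_snd).mul ?_
          exact (hWmeas.comp (measurable_snd.prodMk measurable_fst)).sub
            (hWPmeas.comp (measurable_snd.prodMk measurable_fst))
        · rintro ⟨x, y⟩
          have := (hyint z x)
          rw [Function.uncurry]
          simp only
          rw [abs_mul]
          calc |W z y| * |W y x - WP y x| ≤ 1 * 1 :=
            mul_le_mul (hWabs z y) (hU1 y x) (abs_nonneg _) zero_le_one
          _ = 1 := mul_one 1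
      calc ∫ x in T, A (z, x) ∂μ
          = ∫ x in T, ∫ y, W z y * (W y x - WP y x) ∂μ ∂μ := rfl
        _ = ∫ y, ∫ x in T, W z y * (W y x - WP y x) ∂μ ∂μ :=
            integral_integral_swap hint
        _ = ∫ y, W z y * g y ∂μ := by
            refine integral_congr_ae (Filter.Eventually.of_forall fun y => ?_)
            rw [hgdef]
            simp only
            rw [← integral_const_mul]
    -- bound ∫ y, W z y * g y from above and below using the cut norm
    have hWg_int : Integrable (fun y => W z y * g y) μ := by
      refine bdd_integrable' (((hWm1 z).mul hgmeas).aestronglyMeasurable) 1 fun y => ?_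
      rw [abs_mul]
      calc |W z y| * |g y| ≤ 1 * 1 :=
        mul_le_mul (hWabs z y) (hgbd y) (abs_nonneg _) zero_le_one
      _ = 1 := mul_one 1
    have hupper : ∫ y, W z y * g y ∂μ ≤ ε := by
      set B : Set J := {y | 0 ≤ g y} with hBdef
      have hB : MeasurableSet B := measurableSet_le measurable_const hgmeas
      have hpt : ∀ y, W z y * g y ≤ B.indicator g y := by
        intro y
        by_cases hy : y ∈ B
        · rw [Set.indicator_of_mem hy]
          exact mul_le_of_le_one_left hy (hW1 z y)
        · rw [Set.indicator_of_notMem hy]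
          have : g y < 0 := lt_of_not_ge hy
          exact mul_nonpos_of_nonneg_of_nonpos (hW0 z y) this.le
      calc ∫ y, W z y * g y ∂μ ≤ ∫ y, B.indicator g y ∂μ :=
            integral_mono hWg_int (hgint.indicator hB) hpt
        _ = ∫ y in B, g y ∂μ := integral_indicator hB
        _ ≤ |∫ y in B, ∫ x in T, (W y x - WP y x) ∂μ ∂μ| := le_abs_self _
        _ ≤ ε := hcut B T hB hT
    have hlower : -ε ≤ ∫ y, W z y * g y ∂μ := by
      set B : Set J := {y | g y ≤ 0} with hBdef
      have hB : MeasurableSet B := measurableSet_le hgmeas measurable_const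
      have hpt : ∀ y, B.indicator g y ≤ W z y * g y := by
        intro y
        by_cases hy : y ∈ B
        · rw [Set.indicator_of_mem hy]
          have hgy : g y ≤ 0 := hy
          nlinarith [hW0 z y, hW1 z y]
        · rw [Set.indicator_of_notMem hy]
          have : 0 < g y := lt_of_not_ge hy
          exact mul_nonneg (hW0 z y) this.le
      have h1 : ∫ y in B, g y ∂μ ≤ ∫ y, W z y * g y ∂μ := by
        calc ∫ y in B, g y ∂μ = ∫ y, B.indicator g y ∂μ := (integral_indicator hB).symm
          _ ≤ ∫ y, W z y * g y ∂μ := integral_mono (hgint.indicator hB) hWg_int hpt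
      have h2 : -ε ≤ ∫ y in B, g y ∂μ := by
        have := hcut B T hB hT
        have := abs_le.mp this
        exact this.1
      linarith
    rw [hswap]
    exact abs_le.mpr ⟨hlower, hupper⟩
  -- for each z, the integral of |A (z, ·)| is at most 2ε
  have hz2 : ∀ z : J, ∫ x, |A (z, x)| ∂μ ≤ 2 * ε := by
    intro z
    have hAz : Measurable fun x => A (z, x) :=
      hAmeas.comp (measurable_const.prodMk measurable_id)
    have hAzint : Integrable (fun x => A (z, x)) μ :=
      bdd_integrable' hAz.aestronglyMeasurable 1 fun x => hAbd (z, x)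
    set S : Set J := {x | 0 ≤ A (z, x)} with hSdef
    have hS : MeasurableSet S := measurableSet_le measurable_const hAz
    have hsplit : ∫ x, |A (z, x)| ∂μ
        = ∫ x in S, A (z, x) ∂μ + -∫ x in Sᶜ, A (z, x) ∂μ := by
      rw [← integral_add_compl hS hAzint.abs]
      congr 1
      · exact setIntegral_congr_fun hS fun x hx => abs_of_nonneg hx
      · rw [← integral_neg]
        exact setIntegral_congr_fun hS.compl fun x hx =>
          abs_of_neg (lt_of_not_ge hx)
    rw [hsplit]
    have h1 := hkey z S hS
    have h2 := hkey z Sᶜ hS.compl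
    have h1' := (abs_le.mp h1).2
    have h2' := (abs_le.mp h2).1
    linarith
  -- define F and bound its integral by 2ε
  set F : J → ℝ := fun x => ∫ z, |A (z, x)| ∂μ with hFdef
  have hFmeas : Measurable F := by
    have : Measurable fun p : J × J => |A (p.2, p.1)| :=
      (hAmeas.comp (measurable_snd.prodMk measurable_fst)).abs
    exact (this.stronglyMeasurable.integral_prod_right' (ν := μ)).measurable
  have hF0 : ∀ x, 0 ≤ F x := fun x => integral_nonneg fun z => abs_nonneg _
  have hF1 : ∀ x, F x ≤ 1 := by
    intro x
    calc F x ≤ ∫ z, (1:ℝ) ∂μ := by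
          refine integral_mono ?_ (integrable_const 1) fun z => hAbd (z, x)
          exact bdd_integrable' ((hAmeas.comp
            (measurable_id.prodMk measurable_const)).abs).aestronglyMeasurable 1
            (fun z => by rw [abs_abs]; exact hAbd (z, x))
      _ = 1 := by simp
  have hFint : Integrable F μ :=
    bdd_integrable' hFmeas.aestronglyMeasurable 1 fun x =>
      abs_le.mpr ⟨by linarith [hF0 x], hF1 x⟩
  have hFavg : ∫ x, F x ∂μ ≤ 2 * ε := by
    have hswap : ∫ x, F x ∂μ = ∫ z, ∫ x, |A (z, x)| ∂μ ∂μ := by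
      refine integral_integral_swap ?_
      refine bdd_integrable' ?_ 1 ?_
      · exact ((hAmeas.comp (measurable_snd.prodMk measurable_fst)).abs).aestronglyMeasurable
      · rintro ⟨x, z⟩
        rw [Function.uncurry]
        simp only [abs_abs]
        exact hAbd (z, x)
    rw [hswap]
    calc ∫ z, ∫ x, |A (z, x)| ∂μ ∂μ ≤ ∫ z, 2 * ε ∂μ := by
          refine integral_mono ?_ (integrable_const _) hz2
          have hm : Measurable fun z => ∫ x, |A (z, x)| ∂μ := by
            have : Measurable fun p : J × J => |A p| := hAmeas.abs
            exact (this.stronglyMeasurable.integral_prod_right' (ν := μ)).measurable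
          refine bdd_integrable' hm.aestronglyMeasurable 1 fun z => ?_
          have h0 : 0 ≤ ∫ x, |A (z, x)| ∂μ := integral_nonneg fun x => abs_nonneg _
          have h1 : ∫ x, |A (z, x)| ∂μ ≤ 1 := by
            calc ∫ x, |A (z, x)| ∂μ ≤ ∫ x, (1:ℝ) ∂μ := by
                  refine integral_mono ?_ (integrable_const 1) fun x => hAbd (z, x)
                  exact bdd_integrable' ((hAmeas.comp
                    (measurable_const.prodMk measurable_id)).abs).aestronglyMeasurable 1
                    (fun x => by rw [abs_abs]; exact hAbd (z, x))
              _ = 1 := by simp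
          exact abs_le.mpr ⟨by linarith, h1⟩
      _ = 2 * ε := by simp
  -- simdist bound within a class
  have hsimBound : ∀ (i : Fin k) (x v : J), x ∈ P i → v ∈ P i →
      simdist x v ≤ F x + F v := by
    intro i x v hx hv
    have hWPeq : ∀ y, WP y x = WP y v := by
      intro y
      rw [hWPc (cls y) i y (hcls y) x hx, hWPc (cls y) i y (hcls y) v hv]
    have hinner : ∀ z, ∫ y, W z y * (W y x - W y v) ∂μ = A (z, x) - A (z, v) := by
      intro z
      have heq : (fun y => W z y * (W y x - W y v))
          = fun y => W z y * (W y x - WP y x) - W z y * (W y v - WP y v) := by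
        funext y
        rw [← hWPeq y]
        ring
      rw [heq, integral_sub (hyint z x) (hyint z v)]
    rw [hsim]
    have hstep : ∀ z, |∫ y, W z y * (W y x - W y v) ∂μ| ≤ |A (z, x)| + |A (z, v)| := by
      intro z
      rw [hinner z]
      exact abs_sub _ _
    calc ∫ z, |∫ y, W z y * (W y x - W y v) ∂μ| ∂μ
        ≤ ∫ z, (|A (z, x)| + |A (z, v)|) ∂μ := by
          refine integral_mono ?_ ?_ hstep
          · refine bdd_integrable' ?_ 2 ?_
            · have hm : Measurable fun z => ∫ y, W z y * (W y x - W y v) ∂μ := by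
                have : Measurable fun q : J × J => W q.1 q.2 * (W q.2 x - W q.2 v) := by
                  exact hWmeas.mul (((hWm2 x).comp measurable_snd).sub
                    ((hWm2 v).comp measurable_snd))
                exact (this.stronglyMeasurable.integral_prod_right' (ν := μ)).measurable
              exact hm.abs.aestronglyMeasurable
            · intro z
              rw [abs_abs, hinner z]
              calc |A (z, x) - A (z, v)| ≤ |A (z, x)| + |A (z, v)| := abs_sub _ _
                _ ≤ 1 + 1 := add_le_add (hAbd _) (hAbd _)
                _ = 2 := by norm_num
          · refine Integrable.add ?_ ?_
            · exact bdd_integrable' ((hAmeas.comp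
                (measurable_id.prodMk measurable_const)).abs).aestronglyMeasurable 1
                (fun z => by rw [abs_abs]; exact hAbd (z, x))
            · exact bdd_integrable' ((hAmeas.comp
                (measurable_id.prodMk measurable_const)).abs).aestronglyMeasurable 1
                (fun z => by rw [abs_abs]; exact hAbd (z, v))
      _ = F x + F v := by
          rw [integral_add]
          · exact bdd_integrable' ((hAmeas.comp
              (measurable_id.prodMk measurable_const)).abs).aestronglyMeasurable 1
              (fun z => by rw [abs_abs]; exact hAbd (z, x))
          · exact bdd_integrable' ((hAmeas.comp
              (measurable_id.prodMk measurable_const)).abs).aestronglyMeasurable 1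
              (fun z => by rw [abs_abs]; exact hAbd (z, v))
  -- choose representative points
  have hchoice : ∀ i : Fin k, ∃ v ∈ P i,
      F v * (μ (P i)).toReal ≤ ∫ x in P i, F x ∂μ := fun i =>
    exists_le_avg' (hPmeas i) (hPpos i) (measure_ne_top μ _) hFint.integrableOn
  choose v hvmem hvavg using hchoice
  refine ⟨v, hvmem, ?_⟩
  -- simdist is measurable and bounded
  have hsim01 : ∀ a b, 0 ≤ simdist a b ∧ simdist a b ≤ 1 := by
    intro a b
    constructor
    · rw [hsim]; exact integral_nonneg fun z => abs_nonneg _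
    · rw [hsim]
      have habs1 : ∀ z, |∫ y, W z y * (W y a - W y b) ∂μ| ≤ 1 := by
        intro z
        calc |∫ y, W z y * (W y a - W y b) ∂μ|
            ≤ ∫ y, |W z y * (W y a - W y b)| ∂μ := abs_int_le' _ _
          _ ≤ ∫ y, (1:ℝ) ∂μ := by
              refine integral_mono ?_ (integrable_const 1) fun y => ?_
              · refine Integrable.abs (bdd_integrable' ?_ 1 ?_)
                · exact ((hWm1 z).mul ((hWm2 a).sub (hWm2 b))).aestronglyMeasurable
                · intro y
                  rw [abs_mul]
                  have hd : |W y a - W y b| ≤ 1 := by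
                    rw [abs_le]
                    constructor <;> [linarith [hW0 y a, hW1 y b]; linarith [hW1 y a, hW0 y b]]
                  calc |W z y| * |W y a - W y b| ≤ 1 * 1 :=
                    mul_le_mul (hWabs z y) hd (abs_nonneg _) zero_le_one
                  _ = 1 := mul_one 1
              · rw [abs_mul]
                have hd : |W y a - W y b| ≤ 1 := by
                  rw [abs_le]
                  constructor <;> [linarith [hW0 y a, hW1 y b]; linarith [hW1 y a, hW0 y b]]
                calc |W z y| * |W y a - W y b| ≤ 1 * 1 :=
                  mul_le_mul (hWabs z y) hd (abs_nonneg _) zero_le_one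
                _ = 1 := mul_one 1
          _ = 1 := by simp
      calc ∫ z, |∫ y, W z y * (W y a - W y b) ∂μ| ∂μ ≤ ∫ z, (1:ℝ) ∂μ := by
            refine integral_mono ?_ (integrable_const 1) habs1
            have hm : Measurable fun z => ∫ y, W z y * (W y a - W y b) ∂μ := by
              have : Measurable fun q : J × J => W q.1 q.2 * (W q.2 a - W q.2 b) :=
                hWmeas.mul (((hWm2 a).comp measurable_snd).sub ((hWm2 b).comp measurable_snd))
              exact (this.stronglyMeasurable.integral_prod_right' (ν := μ)).measurable
            exact bdd_integrable' hm.abs.aestronglyMeasurable 1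
              (fun z => by rw [abs_abs]; exact habs1 z)
        _ = 1 := by simp
  have hDmeas : ∀ b : J, Measurable fun x => simdist x b := by
    intro b
    have h1 : Measurable fun p : J × J => ∫ y, W p.2 y * (W y p.1 - W y b) ∂μ := by
      have : Measurable fun q : (J × J) × J => W q.1.2 q.2 * (W q.2 q.1.1 - W q.2 b) := by
        refine (hWmeas.comp (measurable_fst.snd.prodMk measurable_snd)).mul ?_
        exact (hWmeas.comp (measurable_snd.prodMk measurable_fst.fst)).sub
          ((hWm2 b).comp measurable_snd)
      exact (this.stronglyMeasurable.integral_prod_right' (ν := μ)).measurable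
    have h2 : Measurable fun a => ∫ z, |∫ y, W z y * (W y a - W y b) ∂μ| ∂μ := by
      exact (h1.abs.stronglyMeasurable.integral_prod_right' (ν := μ)).measurable
    have : (fun x => simdist x b) = fun a => ∫ z, |∫ y, W z y * (W y a - W y b) ∂μ| ∂μ :=
      funext fun a => hsim a b
    rw [this]
    exact h2
  have hDint : ∀ b : J, Integrable (fun x => simdist x b) μ := fun b =>
    bdd_integrable' (hDmeas b).aestronglyMeasurable 1 fun x =>
      abs_le.mpr ⟨by linarith [(hsim01 x b).1], (hsim01 x b).2⟩
  -- the comparison function G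
  set G : J → ℝ := fun x => ∑ i : Fin k, (P i).indicator (fun x => simdist x (v i)) x with hGdef
  have hGint : Integrable G μ := by
    refine integrable_finset_sum _ fun i _ => ?_
    exact (hDint (v i)).indicator (hPmeas i)
  have hne : (Finset.univ : Finset (Fin k)).Nonempty := Finset.univ_nonempty_iff.mpr ⟨⟨0, hk⟩⟩
  have hmG : ∀ x, (Finset.univ.inf' (Finset.univ_nonempty_iff.mpr ⟨⟨0, hk⟩⟩)
      fun i => simdist x (v i)) ≤ G x := by
    intro x
    have hGx : G x = simdist x (v (cls x)) := by
      rw [hGdef]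
      simp only
      rw [Finset.sum_eq_single (cls x)]
      · exact Set.indicator_of_mem (hcls x) _
      · intro i _ hi
        exact Set.indicator_of_notMem (fun hx => hi (hclsEq hx).symm) _
      · intro h; exact absurd (Finset.mem_univ _) h
    rw [hGx]
    exact Finset.inf'_le _ (Finset.mem_univ (cls x))
  have hinf_nonneg : ∀ x, 0 ≤ (Finset.univ.inf' (Finset.univ_nonempty_iff.mpr ⟨⟨0, hk⟩⟩)
      fun i => simdist x (v i)) := by
    intro x
    exact Finset.le_inf' _ _ fun i _ => (hsim01 x (v i)).1
  -- main chain
  have step1 : (∫ x, (Finset.univ.inf' (Finset.univ_nonempty_iff.mpr ⟨⟨0, hk⟩⟩)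
      fun i => simdist x (v i)) ∂μ) ≤ ∫ x, G x ∂μ :=
    integral_mono_of_nonneg (Filter.Eventually.of_forall hinf_nonneg) hGint
      (Filter.Eventually.of_forall hmG)
  have step2 : ∫ x, G x ∂μ = ∑ i : Fin k, ∫ x in P i, simdist x (v i) ∂μ := by
    rw [hGdef]
    rw [integral_finset_sum _ fun i _ => (hDint (v i)).indicator (hPmeas i)]
    exact Finset.sum_congr rfl fun i _ => integral_indicator (hPmeas i)
  have step3 : ∀ i : Fin k, ∫ x in P i, simdist x (v i) ∂μ
      ≤ ∫ x in P i, F x ∂μ + ∫ x in P i, F x ∂μ := by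
    intro i
    calc ∫ x in P i, simdist x (v i) ∂μ
        ≤ ∫ x in P i, (F x + F (v i)) ∂μ := by
          refine setIntegral_mono_on (hDint (v i)).integrableOn
            (hFint.add (integrable_const _)).integrableOn (hPmeas i)
            fun x hx => hsimBound i x (v i) hx (hvmem i)
      _ = ∫ x in P i, F x ∂μ + F (v i) * (μ (P i)).toReal := by
          rw [integral_add hFint.integrableOn
            (integrableOn_const (measure_ne_top μ _))]
          rw [setIntegral_const, smul_eq_mul, mul_comm, measureReal_def]
      _ ≤ ∫ x in P i, F x ∂μ + ∫ x in P i, F x ∂μ :=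
          add_le_add_right (hvavg i) _
  have hsumF : ∑ i : Fin k, ∫ x in P i, F x ∂μ = ∫ x, F x ∂μ := by
    have := integral_iUnion hPmeas (fun i j hij => hPdisj i j hij)
      (hFint.integrableOn (s := ⋃ i, P i))
    rw [hPcover] at this
    rw [Measure.restrict_univ] at this
    rw [this, tsum_fintype]
  calc (∫ x, (Finset.univ.inf' (Finset.univ_nonempty_iff.mpr ⟨⟨0, hk⟩⟩)
      fun i => simdist x (v i)) ∂μ)
      ≤ ∫ x, G x ∂μ := step1
    _ = ∑ i : Fin k, ∫ x in P i, simdist x (v i) ∂μ := step2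
    _ ≤ ∑ i : Fin k, (∫ x in P i, F x ∂μ + ∫ x in P i, F x ∂μ) :=
        Finset.sum_le_sum fun i _ => step3 i
    _ = 2 * ∑ i : Fin k, ∫ x in P i, F x ∂μ := by
        rw [Finset.sum_add_distrib]; ring
    _ = 2 * ∫ x, F x ∂μ := by rw [hsumF]
    _ ≤ 2 * (2 * ε) := by linarith [hFavg]
    _ = 4 * ε := by ring
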